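/- Let X₁, X₂ and Y be Polish spaces with their Borel σ-algebras, and let Q : Multiset (X₁ ⊕ X₂) → Multiset Y. Suppose there are functions q₁ : Y → X₁ and q₂ : Y → X₂ such that: (1) for every n ∈ ℕ there exists a set M(n) ⊆ ℕ × ℕ with (0,0) ∉ M(n) whenever n > 0, such that for every D ∈ Multiset (X₁ ⊕ X₂) and every y ∈ Y, the multiplicity of y in Q(D) equals n if and only if the pair (multiplicity of Sum.inl (q₁ y) in D, multiplicity of Sum.inr (q₂ y) in D) belongs to M(n); (2) q₁ and q₂ are injective and continuous; and (3) for every Borel set F ⊆ Y, the images q₁(F) ⊆ X₁ and q₂(F) ⊆ X₂ are Borel. Then Q is measurable with respect to the counting σ-algebra on Multiset (X₁ ⊕ X₂) (for the sum measurable structure on X₁ ⊕ X₂) and the counting σ-algebra on Multiset Y. -/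

import Mathlib

/- `countIn D E` is the number of elements of the finite multiset `D` lying in the set `E`,
counted with multiplicity. -/
open Classical in
noncomputable def countIn {X : Type*} (D : Multiset X) (E : Set X) : ℕ :=
  (D.filter (· ∈ E)).card

/-- The counting σ-algebra on the space of finite multisets over a measurable space `X`:
generated by the counting events `C(E,n) = {D | countIn D E = n}` for `E` measurable, `n : ℕ`. -/
def countingMS (X : Type*) [MeasurableSpace X] : MeasurableSpace (Multiset X) :=
  MeasurableSpace.generateFrom
    {C : Set (Multiset X) |
      ∃ (E : Set X) (n : ℕ), MeasurableSet E ∧ C = {D : Multiset X | countIn D E = n}}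

open Classical in
lemma countIn_exists_mem {X : Type*} {D : Multiset X} {E : Set X} (h : countIn D E ≠ 0) :
    ∃ z ∈ D, z ∈ E := by
  unfold countIn at h
  have hne : D.filter (· ∈ E) ≠ 0 := by
    intro h0; rw [h0] at h; simp at h
  obtain ⟨a, ha⟩ := Multiset.exists_mem_of_ne_zero hne
  rw [Multiset.mem_filter] at ha
  exact ⟨a, ha.1, ha.2⟩

open Classical in
lemma countIn_eq_count {X : Type*} [DecidableEq X] (D : Multiset X) (E : Set X) (x : X) (hx : x ∈ E)
    (h : ∀ z ∈ D, z ∈ E → z = x) : countIn D E = D.count x := by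
  unfold countIn
  rw [Multiset.count_eq_card_filter_eq]
  congr 1
  apply Multiset.filter_congr
  intro z hz
  exact ⟨fun h' => (h z hz h').symm, fun h' => h' ▸ hx⟩

open Classical in
lemma countIn_eq_sum {X : Type*} [DecidableEq X] (D : Multiset X) (E : Set X) (T : Finset X)
    (hT : ∀ y, y ∈ E → D.count y ≠ 0 → y ∈ T) :
    countIn D E = ∑ y ∈ T, if y ∈ E then D.count y else 0 := by
  unfold countIn
  rw [← Multiset.toFinset_sum_count_eq]
  have hsub : (D.filter (· ∈ E)).toFinset ⊆ T := by
    intro y hy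
    rw [Multiset.mem_toFinset, Multiset.mem_filter] at hy
    exact hT y hy.2 (Multiset.count_ne_zero.mpr hy.1)
  rw [Finset.sum_congr rfl (fun y _ => Multiset.count_filter)]
  apply Finset.sum_subset hsub
  intro y _ hy
  rw [Multiset.mem_toFinset, Multiset.mem_filter] at hy
  split_ifs with hE
  · by_contra hc
    exact hy ⟨Multiset.count_ne_zero.mp hc, hE⟩
  · rfl

lemma measurable_countIn {X : Type*} [MeasurableSpace X] {E : Set X} (hE : MeasurableSet E) :
    @Measurable (Multiset X) ℕ (countingMS X) ⊤ (fun D : Multiset X => countIn D E) := by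
  letI : MeasurableSpace (Multiset X) := countingMS X
  apply measurable_to_countable'
  intro n
  have : (fun D : Multiset X => countIn D E) ⁻¹' {n} = {D | countIn D E = n} := rfl
  rw [this]
  exact MeasurableSpace.measurableSet_generateFrom ⟨E, n, hE, rfl⟩

open Classical in
theorem qcrit_measurable {X₁ X₂ Y : Type*}
    [TopologicalSpace X₁] [PolishSpace X₁] [MeasurableSpace X₁] [BorelSpace X₁]
    [TopologicalSpace X₂] [PolishSpace X₂] [MeasurableSpace X₂] [BorelSpace X₂]
    [TopologicalSpace Y] [PolishSpace Y] [MeasurableSpace Y] [BorelSpace Y]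
    (Q : Multiset (X₁ ⊕ X₂) → Multiset Y) (q₁ : Y → X₁) (q₂ : Y → X₂)
    (M : ℕ → Set (ℕ × ℕ))
    (hM : ∀ n : ℕ, 0 < n → (0, 0) ∉ M n)
    (hQ : ∀ (D : Multiset (X₁ ⊕ X₂)) (y : Y) (n : ℕ),
      (Q D).count y = n ↔
        (D.count (Sum.inl (q₁ y)), D.count (Sum.inr (q₂ y))) ∈ M n)
    (hq₁inj : Function.Injective q₁) (hq₂inj : Function.Injective q₂)
    (hq₁cont : Continuous q₁) (hq₂cont : Continuous q₂)
    (hq₁img : ∀ F : Set Y, MeasurableSet F → MeasurableSet (q₁ '' F))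
    (hq₂img : ∀ F : Set Y, MeasurableSet F → MeasurableSet (q₂ '' F)) :
    @Measurable _ _ (countingMS (X₁ ⊕ X₂)) (countingMS Y) Q := by
  letI : MeasurableSpace (Multiset (X₁ ⊕ X₂)) := countingMS (X₁ ⊕ X₂)
  apply measurable_generateFrom
  rintro C ⟨F, n, hF, rfl⟩
  have hpre : Q ⁻¹' {D | countIn D F = n} = {D | countIn (Q D) F = n} := rfl
  rw [hpre]
  rcases isEmpty_or_nonempty Y with hY | hY
  · -- Y empty : Q D = 0 always
    have hQ0 : ∀ D, countIn (Q D) F = 0 := by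
      intro D
      have hD : Q D = 0 := Multiset.eq_zero_of_forall_notMem fun y => (IsEmpty.false y).elim
      simp [countIn, hD]
    by_cases hn : n = 0
    · have : {D | countIn (Q D) F = n} = Set.univ := by
        ext D; simp [hQ0, hn]
      rw [this]; exact MeasurableSet.univ
    · have : {D | countIn (Q D) F = n} = ∅ := by
        ext D; simp [hQ0]; omega
      rw [this]; exact MeasurableSet.empty
  -- main case
  letI := TopologicalSpace.upgradeIsCompletelyMetrizable Y
  obtain ⟨u, hu⟩ := TopologicalSpace.exists_dense_seq Y
  -- the function computing counts in Q D from pairs of counts in D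
  set f : ℕ × ℕ → ℕ := fun p => sInf {k | p ∈ M k} with hfdef
  have hf : ∀ p k, p ∈ M k → f p = k := by
    intro p k hk
    have huniq : ∀ k', p ∈ M k' → k' = k := by
      intro k' hk'
      obtain ⟨y⟩ := hY
      set D0 : Multiset (X₁ ⊕ X₂) :=
        Multiset.replicate p.1 (Sum.inl (q₁ y)) + Multiset.replicate p.2 (Sum.inr (q₂ y)) with hD0
      have h1 : D0.count (Sum.inl (q₁ y)) = p.1 := by
        simp [hD0, Multiset.count_replicate]
      have h2 : D0.count (Sum.inr (q₂ y)) = p.2 := by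
        simp [hD0, Multiset.count_replicate]
      have e1 : (Q D0).count y = k := by
        apply (hQ D0 y k).mpr; rw [h1, h2]; exact hk
      have e2 : (Q D0).count y = k' := by
        apply (hQ D0 y k').mpr; rw [h1, h2]; exact hk'
      omega
    have hmem : f p ∈ {k | p ∈ M k} := Nat.sInf_mem ⟨k, hk⟩
    exact huniq _ hmem
  have hcount : ∀ (D : Multiset (X₁ ⊕ X₂)) (y : Y),
      (Q D).count y = f (D.count (Sum.inl (q₁ y)), D.count (Sum.inr (q₂ y))) :=
    fun D y => (hf _ _ ((hQ D y _).mp rfl)).symm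
  have hf0 : f (0, 0) = 0 := by
    obtain ⟨y⟩ := hY
    have h := hcount 0 y
    simp only [Multiset.count_zero] at h
    have h0 : (Q 0).count y = 0 := by
      by_contra hne
      exact hM _ (Nat.pos_of_ne_zero hne) ((hQ 0 y _).mp rfl)
    rw [← h, h0]
  -- the cells
  set r : ℕ → ℝ := fun m => 1 / (m + 1) with hrdef
  have hrpos : ∀ m, 0 < r m := by intro m; positivity
  set cell : ℕ → ℕ → Set Y :=
    fun m i => Metric.ball (u i) (r m) \ ⋃ j < i, Metric.ball (u j) (r m) with hcelldef
  have hcellmeas : ∀ m i, MeasurableSet (cell m i) := fun m i =>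
    measurableSet_ball.diff
      (MeasurableSet.biUnion (Set.to_countable _) fun _ _ => measurableSet_ball)
  set E₁ : ℕ → ℕ → Set (X₁ ⊕ X₂) := fun m i => Sum.inl '' (q₁ '' (F ∩ cell m i)) with hE₁def
  set E₂ : ℕ → ℕ → Set (X₁ ⊕ X₂) := fun m i => Sum.inr '' (q₂ '' (F ∩ cell m i)) with hE₂def
  have hE₁ : ∀ m i, MeasurableSet (E₁ m i) := fun m i =>
    measurableSet_inl_image.mpr (hq₁img _ (hF.inter (hcellmeas m i)))
  have hE₂ : ∀ m i, MeasurableSet (E₂ m i) := fun m i =>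
    measurableSet_inr_image.mpr (hq₂img _ (hF.inter (hcellmeas m i)))
  set pair : ℕ → ℕ → Multiset (X₁ ⊕ X₂) → ℕ × ℕ :=
    fun m i D => (countIn D (E₁ m i), countIn D (E₂ m i)) with hpairdef
  set G : ℕ → Multiset (X₁ ⊕ X₂) → ENNReal :=
    fun m D => ∑' i, (f (pair m i D) : ENNReal) with hGdef
  have hGmeas : ∀ m, Measurable (G m) := by
    intro m
    apply Measurable.ennreal_tsum
    intro i
    have hp : Measurable (fun D => pair m i D) :=
      Measurable.prodMk (measurable_countIn (hE₁ m i)) (measurable_countIn (hE₂ m i))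
    exact (measurable_of_countable fun p : ℕ × ℕ => (f p : ENNReal)).comp hp
  -- key : eventual equality
  have hkey : ∀ D : Multiset (X₁ ⊕ X₂),
      ∀ᶠ m in Filter.atTop, G m D = (countIn (Q D) F : ENNReal) := by
    intro D
    set c₁ : Y → ℕ := fun y => D.count (Sum.inl (q₁ y)) with hc₁def
    set c₂ : Y → ℕ := fun y => D.count (Sum.inr (q₂ y)) with hc₂def
    set R : Set Y := {y | c₁ y ≠ 0 ∨ c₂ y ≠ 0} ∩ F with hRdef
    have hRfin : R.Finite := by
      apply Set.Finite.inter_of_left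
      rw [Set.setOf_or]
      apply Set.Finite.union
      · have h1 : {y | c₁ y ≠ 0} = q₁ ⁻¹' (Sum.inl ⁻¹' {z | z ∈ D}) := by
          ext y; simp [hc₁def, Multiset.count_ne_zero]
        rw [h1]
        exact ((D.finite_toSet.preimage Sum.inl_injective.injOn).preimage hq₁inj.injOn)
      · have h2 : {y | c₂ y ≠ 0} = q₂ ⁻¹' (Sum.inr ⁻¹' {z | z ∈ D}) := by
          ext y; simp [hc₂def, Multiset.count_ne_zero]
        rw [h2]
        exact ((D.finite_toSet.preimage Sum.inr_injective.injOn).preimage hq₂inj.injOn)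
    set RF : Finset Y := hRfin.toFinset with hRFdef
    have hRF_mem : ∀ y, y ∈ RF ↔ ((c₁ y ≠ 0 ∨ c₂ y ≠ 0) ∧ y ∈ F) := by
      intro y; rw [hRFdef, Set.Finite.mem_toFinset]; rfl
    -- separation
    obtain ⟨ε, hεpos, hsep⟩ :
        ∃ ε > 0, ∀ y ∈ RF, ∀ y' ∈ RF, y ≠ y' → ε ≤ dist y y' := by
      set T := ((RF ×ˢ RF).filter fun p => p.1 ≠ p.2).image fun p => dist p.1 p.2 with hTdef
      by_cases hTne : T.Nonempty
      · refine ⟨T.min' hTne, ?_, ?_⟩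
        · obtain ⟨p, hp, hpd⟩ := Finset.mem_image.mp (T.min'_mem hTne)
          have hne := (Finset.mem_filter.mp hp).2
          rw [← hpd]
          exact dist_pos.mpr hne
        · intro y hy y' hy' hne
          exact T.min'_le _ (Finset.mem_image.mpr
            ⟨(y, y'), Finset.mem_filter.mpr ⟨Finset.mem_product.mpr ⟨hy, hy'⟩, hne⟩, rfl⟩)
      · refine ⟨1, one_pos, fun y hy y' hy' hne => absurd ?_ hTne⟩
        exact ⟨dist y y', Finset.mem_image.mpr
          ⟨(y, y'), Finset.mem_filter.mpr ⟨Finset.mem_product.mpr ⟨hy, hy'⟩, hne⟩, rfl⟩⟩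
    obtain ⟨m₀, hm₀⟩ := exists_nat_one_div_lt (half_pos hεpos)
    filter_upwards [Filter.eventually_ge_atTop m₀] with m hm
    have hrε : r m < ε / 2 := by
      refine lt_of_le_of_lt ?_ hm₀
      rw [hrdef]
      apply one_div_le_one_div_of_le
      · positivity
      · exact_mod_cast Nat.succ_le_succ hm
    -- same-ball separation for points of RF
    have hball_eq : ∀ (i : ℕ) (y y' : Y), y ∈ RF → y' ∈ RF →
        y ∈ Metric.ball (u i) (r m) → y' ∈ Metric.ball (u i) (r m) → y = y' := by
      intro i y y' hy hy' hb hb'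
      by_contra hne
      have h1 : dist y y' ≤ dist y (u i) + dist (u i) y' := dist_triangle _ _ _
      rw [Metric.mem_ball] at hb hb'
      have h2 : dist (u i) y' < r m := by rw [dist_comm]; exact hb'
      have h3 : dist y y' < ε := by linarith
      exact absurd h3 (not_lt.mpr (hsep y hy y' hy' hne))
    -- cell index
    have hcov : ∀ y : Y, ∃ i, y ∈ Metric.ball (u i) (r m) := by
      intro y
      obtain ⟨i, hi⟩ := hu.exists_dist_lt y (hrpos m)
      exact ⟨i, Metric.mem_ball.mpr hi⟩
    set idx : Y → ℕ := fun y => Nat.find (hcov y) with hidxdef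
    have hidx_ball : ∀ y, y ∈ Metric.ball (u (idx y)) (r m) := fun y => Nat.find_spec (hcov y)
    have hidx_cell : ∀ y, y ∈ cell m (idx y) := by
      intro y
      refine ⟨hidx_ball y, ?_⟩
      intro hmem
      rw [Set.mem_iUnion₂] at hmem
      obtain ⟨j, hj, hjm⟩ := hmem
      exact Nat.find_min (hcov y) hj hjm
    have hcell_ball : ∀ i y, y ∈ cell m i → y ∈ Metric.ball (u i) (r m) := fun i y h => h.1
    have hcell_idx : ∀ y i, y ∈ cell m i → i = idx y := by
      intro y i hyc
      have h1 : idx y ≤ i := Nat.find_le hyc.1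
      rcases eq_or_lt_of_le h1 with h | h
      · exact h.symm
      · exfalso
        exact hyc.2 (Set.mem_iUnion₂.mpr ⟨idx y, h, hidx_ball y⟩)
    -- values of the pair function
    have hpair_c₁ : ∀ y₀ ∈ RF, countIn D (E₁ m (idx y₀)) = c₁ y₀ := by
      intro y₀ hy₀
      show countIn D (E₁ m (idx y₀)) = D.count (Sum.inl (q₁ y₀))
      apply countIn_eq_count D _ (Sum.inl (q₁ y₀))
      · exact ⟨q₁ y₀, ⟨y₀, ⟨((hRF_mem y₀).mp hy₀).2, hidx_cell y₀⟩, rfl⟩, rfl⟩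
      · rintro z hz ⟨x, ⟨y, ⟨hyF, hyc⟩, rfl⟩, rfl⟩
        have hcy : c₁ y ≠ 0 := Multiset.count_ne_zero.mpr hz
        have hyRF : y ∈ RF := (hRF_mem y).mpr ⟨Or.inl hcy, hyF⟩
        have hyy : y = y₀ :=
          hball_eq (idx y₀) y y₀ hyRF hy₀ (hcell_ball _ _ hyc) (hidx_ball y₀)
        rw [hyy]
    have hpair_c₂ : ∀ y₀ ∈ RF, countIn D (E₂ m (idx y₀)) = c₂ y₀ := by
      intro y₀ hy₀
      show countIn D (E₂ m (idx y₀)) = D.count (Sum.inr (q₂ y₀))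
      apply countIn_eq_count D _ (Sum.inr (q₂ y₀))
      · exact ⟨q₂ y₀, ⟨y₀, ⟨((hRF_mem y₀).mp hy₀).2, hidx_cell y₀⟩, rfl⟩, rfl⟩
      · rintro z hz ⟨x, ⟨y, ⟨hyF, hyc⟩, rfl⟩, rfl⟩
        have hcy : c₂ y ≠ 0 := Multiset.count_ne_zero.mpr hz
        have hyRF : y ∈ RF := (hRF_mem y).mpr ⟨Or.inr hcy, hyF⟩
        have hyy : y = y₀ :=
          hball_eq (idx y₀) y y₀ hyRF hy₀ (hcell_ball _ _ hyc) (hidx_ball y₀)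
        rw [hyy]
    have hpair_zero : ∀ i, (∀ y ∈ RF, idx y ≠ i) → pair m i D = (0, 0) := by
      intro i hi
      have h₁ : countIn D (E₁ m i) = 0 := by
        by_contra h
        obtain ⟨z, hzD, hzE⟩ := countIn_exists_mem h
        obtain ⟨x, ⟨y, ⟨hyF, hyc⟩, rfl⟩, rfl⟩ := hzE
        have hcy : c₁ y ≠ 0 := Multiset.count_ne_zero.mpr hzD
        have hyRF : y ∈ RF := (hRF_mem y).mpr ⟨Or.inl hcy, hyF⟩
        exact hi y hyRF (hcell_idx y i hyc).symm
      have h₂ : countIn D (E₂ m i) = 0 := by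
        by_contra h
        obtain ⟨z, hzD, hzE⟩ := countIn_exists_mem h
        obtain ⟨x, ⟨y, ⟨hyF, hyc⟩, rfl⟩, rfl⟩ := hzE
        have hcy : c₂ y ≠ 0 := Multiset.count_ne_zero.mpr hzD
        have hyRF : y ∈ RF := (hRF_mem y).mpr ⟨Or.inr hcy, hyF⟩
        exact hi y hyRF (hcell_idx y i hyc).symm
      rw [hpairdef]
      simp only [h₁, h₂]
    -- injectivity of idx on RF
    have hinj : ∀ y ∈ RF, ∀ y' ∈ RF, idx y = idx y' → y = y' := by
      intro y hy y' hy' he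
      refine hball_eq (idx y) y y' hy hy' (hidx_ball y) ?_
      rw [he]; exact hidx_ball y'
    -- compute G m D
    have hGD : G m D = ∑ i ∈ RF.image idx, (f (pair m i D) : ENNReal) := by
      rw [hGdef]
      apply tsum_eq_sum
      intro i hi
      have hz : pair m i D = (0, 0) :=
        hpair_zero i fun y hy he => hi (Finset.mem_image.mpr ⟨y, hy, he⟩)
      rw [hz, hf0]
      simp
    rw [hGD, Finset.sum_image (fun y hy y' hy' h => hinj y hy y' hy' h)]
    have hterm : ∀ y ∈ RF, (f (pair m (idx y) D) : ENNReal) = ((Q D).count y : ENNReal) := by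
      intro y hy
      have hp : pair m (idx y) D = (c₁ y, c₂ y) := by
        rw [hpairdef]
        simp only [hpair_c₁ y hy, hpair_c₂ y hy]
      rw [hp, ← hcount D y]
    rw [Finset.sum_congr rfl hterm, ← Nat.cast_sum]
    congr 1
    have hT : ∀ y, y ∈ F → (Q D).count y ≠ 0 → y ∈ RF := by
      intro y hyF hyc
      have hmem : (D.count (Sum.inl (q₁ y)), D.count (Sum.inr (q₂ y))) ∈ M ((Q D).count y) :=
        (hQ D y _).mp rfl
      have hne : (c₁ y, c₂ y) ≠ ((0 : ℕ), (0 : ℕ)) := by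
        intro hcontra
        have : ((0 : ℕ), (0 : ℕ)) ∈ M ((Q D).count y) := by
          rw [← hcontra]; exact hmem
        exact hM _ (Nat.pos_of_ne_zero hyc) this
      have hor : c₁ y ≠ 0 ∨ c₂ y ≠ 0 := by
        by_contra hc
        push_neg at hc
        exact hne (by rw [hc.1, hc.2])
      exact (hRF_mem y).mpr ⟨hor, hyF⟩
    rw [countIn_eq_sum (Q D) F RF hT]
    symm
    apply Finset.sum_congr rfl
    intro y hy
    rw [if_pos ((hRF_mem y).mp hy).2]
  -- conclude
  have hset : {D : Multiset (X₁ ⊕ X₂) | countIn (Q D) F = n} =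
      (fun D => Filter.liminf (fun m => G m D) Filter.atTop) ⁻¹' {(n : ENNReal)} := by
    ext D
    have hlim : Filter.liminf (fun m => G m D) Filter.atTop = (countIn (Q D) F : ENNReal) := by
      apply Filter.Tendsto.liminf_eq
      exact tendsto_const_nhds.congr' ((hkey D).mono fun m h => h.symm)
    simp only [Set.mem_preimage, Set.mem_singleton_iff, Set.mem_setOf_eq, hlim, Nat.cast_inj]
  rw [hset]
  exact Measurable.liminf hGmeas (measurableSet_singleton _)
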